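/- Jacobsthal's identity (Lemma 4.4 of the paper): for all a, b ∈ ZMod r, ∑_{x ∈ ZMod r} χ(x)·χ(x² + a·x + b) = ∑_{x ∈ ZMod r} χ(x + a)·χ(x² − 4·b), as an identity of integers. -/

import Mathlib

open Finset

open scoped Classical

/-- The quadratic character of `ZMod r` with values in `ℤ`:
`χ(m) = 1` if `m` is a nonzero square, `−1` if `m` is a nonsquare, `χ(0) = 0`. -/
noncomputable def chi (r : ℕ) (m : ZMod r) : ℤ :=
  if m = 0 then 0 else if IsSquare m then 1 else -1

/-- Jacobsthal's identity (Lemma 4.4): for all `a, b ∈ ZMod r`,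
`∑_x χ(x)·χ(x² + ax + b) = ∑_x χ(x + a)·χ(x² − 4b)`. -/
theorem stmt11 (r : ℕ) [NeZero r] (hr : r.Prime) (hodd : Odd r) (a b : ZMod r) :
    ∑ x : ZMod r, chi r x * chi r (x ^ 2 + a * x + b) =
      ∑ x : ZMod r, chi r (x + a) * chi r (x ^ 2 - 4 * b) := by
  haveI : Fact r.Prime := ⟨hr⟩
  have hr2 : ringChar (ZMod r) ≠ 2 := by
    rw [ZMod.ringChar_zmod_n]
    rintro rfl
    exact (by decide : ¬ Odd 2) hodd
  set χ := quadraticChar (ZMod r) with hχ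
  have chi_eq : ∀ m : ZMod r, chi r m = χ m := by
    intro m
    by_cases h0 : m = 0 <;> by_cases hs : IsSquare m <;>
      simp [chi, hχ, quadraticChar_apply, quadraticCharFun, h0, hs]
  simp only [chi_eq]
  have h2 : (2 : ZMod r) ≠ 0 := Ring.two_ne_zero hr2
  by_cases hb : b = 0
  · subst hb
    refine Finset.sum_congr rfl fun x _ => ?_
    have e1 : x ^ 2 + a * x + 0 = x * (x + a) := by ring
    have e2 : x ^ 2 - 4 * 0 = x * x := by ring
    rw [e1, e2, map_mul, map_mul]
    ring
  -- `b ≠ 0` case.  Count roots of `x² - t·x + b = 0`.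
  have hcard : ∀ t : ZMod r,
      (({x : ZMod r | x ^ 2 - t * x + b = 0}.toFinset.card : ℤ)) = χ (t ^ 2 - 4 * b) + 1 := by
    intro t
    rw [← quadraticChar_card_sqrts hr2 (t ^ 2 - 4 * b)]
    congr 1
    refine Finset.card_bij' (fun x _ => 2 * x - t) (fun y _ => (y + t) * 2⁻¹) ?_ ?_ ?_ ?_
    · intro x hx
      rw [Set.mem_toFinset] at hx ⊢
      have hx' : x ^ 2 - t * x + b = 0 := hx
      show (2 * x - t) ^ 2 = t ^ 2 - 4 * b
      linear_combination 4 * hx'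
    · intro y hy
      rw [Set.mem_toFinset] at hy ⊢
      have hy' : y ^ 2 = t ^ 2 - 4 * b := hy
      show ((y + t) * 2⁻¹) ^ 2 - t * ((y + t) * 2⁻¹) + b = 0
      field_simp
      linear_combination hy'
    · intro x _
      field_simp
      ring
    · intro y _
      field_simp
      ring
  have step1 : ∑ t : ZMod r, χ (t + a) * χ (t ^ 2 - 4 * b)
      = ∑ t : ZMod r, (χ (t + a) * ({x : ZMod r | x ^ 2 - t * x + b = 0}.toFinset.card : ℤ)
          - χ (t + a)) := by
    refine Finset.sum_congr rfl fun t _ => ?_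
    rw [hcard t]; ring
  have step2 : ∑ t : ZMod r, χ (t + a) = 0 := by
    rw [← quadraticChar_sum_zero hr2]
    exact Fintype.sum_equiv (Equiv.addRight a) _ _ (fun t => rfl)
  have step3 : ∀ t : ZMod r,
      χ (t + a) * ({x : ZMod r | x ^ 2 - t * x + b = 0}.toFinset.card : ℤ)
        = ∑ x : ZMod r, if x ^ 2 - t * x + b = 0 then χ (t + a) else 0 := by
    intro t
    rw [← Finset.sum_filter, Finset.sum_const, Set.toFinset_setOf, nsmul_eq_mul, mul_comm]
  have step5 : ∀ x : ZMod r,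
      (∑ t : ZMod r, if x ^ 2 - t * x + b = 0 then χ (t + a) else 0)
        = χ x * χ (x ^ 2 + a * x + b) := by
    intro x
    by_cases hx : x = 0
    · subst hx
      have hz : χ (0 : ZMod r) = 0 := χ.map_zero
      simp [hb, hz]
    · have cond : ∀ t : ZMod r, (x ^ 2 - t * x + b = 0) ↔ t = (x ^ 2 + b) * x⁻¹ := by
        intro t
        rw [eq_mul_inv_iff_mul_eq₀ hx]
        constructor <;> intro h <;> linear_combination -h
      simp_rw [cond]
      rw [Finset.sum_ite_eq' Finset.univ ((x ^ 2 + b) * x⁻¹) (fun t => χ (t + a))]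
      simp only [Finset.mem_univ, if_true]
      have e3 : (x ^ 2 + b) * x⁻¹ + a = (x ^ 2 + a * x + b) * x⁻¹ := by
        field_simp; ring
      have hxinv : χ x⁻¹ = χ x := by
        have h1 : χ x⁻¹ * χ x = 1 := by
          rw [← map_mul, inv_mul_cancel₀ hx, map_one]
        have hsq : χ x * χ x = 1 := by
          have := quadraticChar_sq_one (F := ZMod r) hx
          rwa [sq] at this
        calc χ x⁻¹ = χ x⁻¹ * (χ x * χ x) := by rw [hsq, mul_one]
          _ = (χ x⁻¹ * χ x) * χ x := by ring
          _ = χ x := by rw [h1, one_mul]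
      rw [e3, map_mul, hxinv]
      ring
  rw [step1, Finset.sum_sub_distrib, step2, sub_zero,
    Finset.sum_congr rfl fun t _ => step3 t, Finset.sum_comm]
  exact Finset.sum_congr rfl fun x _ => (step5 x).symm
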